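/- Let ζ = exp(2πi/36). Then |ζ¹¹ − ζ⁷ + ζ⁵ − ζ³ + ζ| = |ζ¹¹ − 2ζ⁹ + ζ⁷ − ζ⁵ + ζ³|. -/

import Mathlib

/-- For `ζ = e^{2πi/36}`: `|ζ¹¹ − ζ⁷ + ζ⁵ − ζ³ + ζ| = |ζ¹¹ − 2ζ⁹ + ζ⁷ − ζ⁵ + ζ³|`. -/
theorem stmt10 (ζ : ℂ) (hζ : ζ = Complex.exp (2 * Real.pi * Complex.I / 36)) :
    ‖ζ^11 - ζ^7 + ζ^5 - ζ^3 + ζ‖ =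
      ‖ζ^11 - 2*ζ^9 + ζ^7 - ζ^5 + ζ^3‖ := by
  have habs : ‖ζ‖ = 1 := by
    rw [hζ]
    have : (2 * Real.pi * Complex.I / 36 : ℂ) = ((Real.pi / 18 : ℝ) : ℂ) * Complex.I := by
      push_cast; ring
    rw [this, Complex.norm_exp_ofReal_mul_I]
  have h18 : ζ ^ 18 = -1 := by
    rw [hζ, ← Complex.exp_nat_mul]
    rw [show ((18:ℕ):ℂ) * (2 * Real.pi * Complex.I / 36) = Real.pi * Complex.I by
      push_cast; ring, Complex.exp_pi_mul_I]
  have h6 : ζ ^ 6 ≠ -1 := by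
    have h6e : ζ ^ 6 = Complex.exp (((Real.pi / 3 : ℝ) : ℂ) * Complex.I) := by
      rw [hζ, ← Complex.exp_nat_mul]
      congr 1
      push_cast; ring
    intro h
    have hre : (ζ ^ 6).re = Real.cos (Real.pi / 3) := by
      rw [h6e, Complex.exp_ofReal_mul_I_re]
    rw [h, Real.cos_pi_div_three] at hre
    norm_num at hre
  have hmin : ζ ^ 12 - ζ ^ 6 + 1 = 0 := by
    have key : (ζ ^ 6 + 1) * (ζ ^ 12 - ζ ^ 6 + 1) = 0 := by
      have : (ζ ^ 6 + 1) * (ζ ^ 12 - ζ ^ 6 + 1) = ζ ^ 18 + 1 := by ring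
      rw [this, h18]; ring
    rcases mul_eq_zero.mp key with h | h
    · exact absurd (by linear_combination h) h6
    · exact h
  have hAB : ζ^11 - ζ^7 + ζ^5 - ζ^3 + ζ = (ζ^11 - 2*ζ^9 + ζ^7 - ζ^5 + ζ^3) * ζ^14 := by
    linear_combination (-ζ^13 + 2*ζ^11 - ζ^9 + ζ^5 - ζ^3 + ζ) * hmin
  rw [hAB, norm_mul, norm_pow, habs]
  simp
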